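/- Let k ≥ 1 and let S_1, …, S_k be strings over an alphabet Σ, each of length M, where M is even, and let γ denote the empty string. If LCS(S_1, …, S_k) ≥ M/2, then δ_CE(S_1, …, S_k, γ) = M/2; and if LCS(S_1, …, S_k) < M/2, then δ_CE(S_1, …, S_k, γ) > M/2. -/

import Mathlib

/-- Cost structure for Levenshtein distance (formerly in Mathlib). -/
structure Levenshtein.Cost (α β δ : Type*) where
  delete : α → δ
  insert : β → δ
  substitute : α → β → δ

/-- The default unit cost (formerly in Mathlib). -/
def Levenshtein.defaultCost {α : Type*} [DecidableEq α] : Levenshtein.Cost α α ℕ where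
  delete _ := 1
  insert _ := 1
  substitute a b := if a = b then 0 else 1

/-- The Levenshtein distance with cost `C` (formerly in Mathlib, same recurrence). -/
def levenshtein {α β δ : Type*} [AddZeroClass δ] [Min δ] (C : Levenshtein.Cost α β δ) :
    List α → List β → δ
  | [], [] => 0
  | [], y :: ys => C.insert y + levenshtein C [] ys
  | x :: xs, [] => C.delete x + levenshtein C xs []
  | x :: xs, y :: ys =>
    min (C.delete x + levenshtein C xs (y :: ys))
      (min (C.insert y + levenshtein C (x :: xs) ys) (C.substitute x y + levenshtein C xs ys))
termination_by xs ys => xs.length + ys.length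

section levaux
variable {α β δ : Type*} [AddZeroClass δ] [Min δ] (C : Levenshtein.Cost α β δ)

@[simp] theorem levenshtein_nil_nil : levenshtein C [] [] = 0 := by
  rw [levenshtein]

@[simp] theorem levenshtein_nil_cons (y : β) (ys : List β) :
    levenshtein C [] (y :: ys) = C.insert y + levenshtein C [] ys := by
  rw [levenshtein]

@[simp] theorem levenshtein_cons_nil (x : α) (xs : List α) :
    levenshtein C (x :: xs) [] = C.delete x + levenshtein C xs [] := by
  rw [levenshtein]

@[simp] theorem levenshtein_cons_cons (x : α) (xs : List α) (y : β) (ys : List β) :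
    levenshtein C (x :: xs) (y :: ys) =
      min (C.delete x + levenshtein C xs (y :: ys))
        (min (C.insert y + levenshtein C (x :: xs) ys) (C.substitute x y + levenshtein C xs ys)) := by
  rw [levenshtein]

end levaux

@[simp] theorem Levenshtein.defaultCost_delete {α : Type*} [DecidableEq α] (a : α) :
    (Levenshtein.defaultCost : Levenshtein.Cost α α ℕ).delete a = 1 := rfl

@[simp] theorem Levenshtein.defaultCost_insert {α : Type*} [DecidableEq α] (a : α) :
    (Levenshtein.defaultCost : Levenshtein.Cost α α ℕ).insert a = 1 := rfl

@[simp] theorem Levenshtein.defaultCost_substitute {α : Type*} [DecidableEq α] (a b : α) :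
    (Levenshtein.defaultCost : Levenshtein.Cost α α ℕ).substitute a b = if a = b then 0 else 1 := rfl

/-- The Levenshtein edit distance between two strings. -/
def editDist {α : Type*} [DecidableEq α] (s t : List α) : ℕ :=
  levenshtein Levenshtein.defaultCost s t

/-- The center edit distance of a family of strings:
the minimum over target strings `T` of the maximum edit distance to `T`. -/
noncomputable def centerED {α : Type*} [DecidableEq α] (L : List (List α)) : ℕ :=
  sInf { d : ℕ | ∃ T : List α, d = (L.map fun s => editDist s T).foldr max 0 }

/-- The length of a longest common subsequence of a family of strings. -/
noncomputable def lcsLen {α : Type*} (L : List (List α)) : ℕ :=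
  sSup { m : ℕ | ∃ T : List α, T.length = m ∧ ∀ s ∈ L, T.Sublist s }

section aux
variable {α : Type*} [DecidableEq α]

lemma editDist_nil_right (s : List α) : editDist s [] = s.length := by
  induction s with
  | nil => simp [editDist, levenshtein_nil_nil]
  | cons x xs ih => simpa [editDist, Nat.add_comm] using ih

lemma editDist_nil_left (t : List α) : editDist [] t = t.length := by
  induction t with
  | nil => simp [editDist, levenshtein_nil_nil]
  | cons y ys ih => simpa [editDist, Nat.add_comm] using ih

lemma editDist_cons_cons (x y : α) (xs ys : List α) :
    editDist (x :: xs) (y :: ys) =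
      min (1 + editDist xs (y :: ys)) (min (1 + editDist (x :: xs) ys)
        ((if x = y then 0 else 1) + editDist xs ys)) := by
  simp [editDist, levenshtein_cons_cons]

lemma editDist_cons_left_le (x : α) (xs t : List α) :
    editDist (x :: xs) t ≤ 1 + editDist xs t := by
  cases t with
  | nil => simp [editDist_nil_right, Nat.add_comm]
  | cons y ys => rw [editDist_cons_cons]; exact min_le_left _ _

lemma editDist_le_of_sublist {s t : List α} (h : t.Sublist s) :
    editDist s t + t.length ≤ s.length := by
  induction h with
  | slnil => simp [editDist_nil_right]
  | @cons l₁ l₂ a h ih =>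
      have h2 := editDist_cons_left_le a l₂ l₁
      simp only [List.length_cons]
      omega
  | @cons_cons l₁ l₂ a h ih =>
      have h2 : editDist (a :: l₂) (a :: l₁) ≤ editDist l₂ l₁ := by
        rw [editDist_cons_cons]
        refine le_trans (le_trans (min_le_right _ _) (min_le_right _ _)) ?_
        simp
      simp only [List.length_cons]
      omega

lemma exists_common_subseq (s t : List α) :
    ∃ U : List α, U.Sublist s ∧ U.Sublist t ∧ s.length ≤ editDist s t + U.length := by
  induction s generalizing t with
  | nil => exact ⟨[], by simp, by simp, by simp⟩
  | cons x xs ihs =>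
    induction t with
    | nil => exact ⟨[], by simp, by simp, by simp [editDist_nil_right]⟩
    | cons y ys iht =>
      rcases le_total (1 + editDist xs (y :: ys))
          (min (1 + editDist (x :: xs) ys) ((if x = y then 0 else 1) + editDist xs ys)) with h | h
      · obtain ⟨U, hUs, hUt, hlen⟩ := ihs (y :: ys)
        refine ⟨U, hUs.cons x, hUt, ?_⟩
        rw [editDist_cons_cons, min_eq_left h]
        simp only [List.length_cons]
        omega
      · rw [editDist_cons_cons, min_eq_right h]
        rcases le_total (1 + editDist (x :: xs) ys)
            ((if x = y then 0 else 1) + editDist xs ys) with h2 | h2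
        · obtain ⟨U, hUs, hUt, hlen⟩ := iht
          refine ⟨U, hUs, hUt.cons y, ?_⟩
          rw [min_eq_left h2]
          omega
        · rw [min_eq_right h2]
          obtain ⟨U, hUs, hUt, hlen⟩ := ihs ys
          by_cases hxy : x = y
          · subst hxy
            refine ⟨x :: U, hUs.cons₂ x, hUt.cons₂ x, ?_⟩
            simp only [if_pos rfl, List.length_cons, zero_add]
            omega
          · refine ⟨U, hUs.cons x, hUt.cons y, ?_⟩
            simp only [if_neg hxy, List.length_cons]
            omega

lemma length_le_editDist_add (s t : List α) : s.length ≤ editDist s t + t.length := by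
  obtain ⟨U, _, hUt, hlen⟩ := exists_common_subseq s t
  have := hUt.length_le
  omega

lemma le_foldr_max {l : List ℕ} {x : ℕ} (h : x ∈ l) : x ≤ l.foldr max 0 := by
  induction l with
  | nil => simp at h
  | cons a l ih =>
    rcases List.mem_cons.mp h with rfl | h
    · exact le_max_left _ _
    · exact (ih h).trans (le_max_right _ _)

lemma foldr_max_le {l : List ℕ} {b : ℕ} (h : ∀ x ∈ l, x ≤ b) : l.foldr max 0 ≤ b := by
  induction l with
  | nil => simp
  | cons a l ih =>
    simp only [List.foldr_cons]
    exact max_le (h a (by simp)) (ih fun x hx => h x (List.mem_cons_of_mem _ hx))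

end aux

/-- For `k ≥ 1` strings `S₁, …, S_k`, each of even length `M`, and the
empty string `γ`: if `LCS(S₁, …, S_k) ≥ M/2` then `δ_CE(S₁, …, S_k, γ) = M/2`, and if
`LCS(S₁, …, S_k) < M/2` then `δ_CE(S₁, …, S_k, γ) > M/2`. -/
theorem center_edit_distance_with_empty_string
    {α : Type*} [DecidableEq α] (k M : ℕ) (hk : 1 ≤ k) (hM : 2 ∣ M)
    (S : Fin k → List α) (hlen : ∀ i, (S i).length = M) :
    (M / 2 ≤ lcsLen (List.ofFn S) →
      centerED (List.ofFn S ++ [([] : List α)]) = M / 2) ∧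
    (lcsLen (List.ofFn S) < M / 2 →
      M / 2 < centerED (List.ofFn S ++ [([] : List α)])) := by
  obtain ⟨m, rfl⟩ := hM
  have hM2 : 2 * m / 2 = m := by omega
  rw [hM2]
  set L : List (List α) := List.ofFn S ++ [([] : List α)] with hL
  have hS0 : S ⟨0, hk⟩ ∈ List.ofFn S := by
    rw [List.mem_ofFn]; exact ⟨⟨0, hk⟩, rfl⟩
  have hS0L : S ⟨0, hk⟩ ∈ L := List.mem_append_left _ hS0
  have hnilL : ([] : List α) ∈ L := List.mem_append_right _ (by simp)
  have hmemL : ∀ s ∈ L, s ∈ List.ofFn S ∨ s = [] := by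
    intro s hs
    rcases List.mem_append.mp hs with h | h
    · exact Or.inl h
    · exact Or.inr (by simpa using h)
  have hlenL : ∀ s ∈ List.ofFn S, s.length = 2 * m := by
    intro s hs
    obtain ⟨i, rfl⟩ := List.mem_ofFn.mp hs
    exact hlen i
  -- lower bound on the max for any target T
  have hlow : ∀ T : List α, 2 * m ≤ 2 * ((L.map fun s => editDist s T).foldr max 0) := by
    intro T
    have h1 : editDist (S ⟨0, hk⟩) T ≤ (L.map fun s => editDist s T).foldr max 0 :=
      le_foldr_max (List.mem_map_of_mem hS0L)
    have h2 : editDist ([] : List α) T ≤ (L.map fun s => editDist s T).foldr max 0 :=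
      le_foldr_max (List.mem_map_of_mem hnilL)
    have h3 := length_le_editDist_add (S ⟨0, hk⟩) T
    rw [hlen ⟨0, hk⟩] at h3
    rw [editDist_nil_left] at h2
    omega
  have hDne : {d : ℕ | ∃ T : List α, d = (L.map fun s => editDist s T).foldr max 0}.Nonempty :=
    ⟨_, ⟨[], rfl⟩⟩
  obtain ⟨T0, hT0⟩ := Nat.sInf_mem hDne
  have hclow : m ≤ centerED L := by
    have := hlow T0
    rw [centerED, ← hT0] at *
    omega
  -- the LCS candidate set
  set K : Set ℕ := {n : ℕ | ∃ T : List α, T.length = n ∧ ∀ s ∈ List.ofFn S, T.Sublist s}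
    with hK
  have hKbdd : BddAbove K := by
    refine ⟨2 * m, ?_⟩
    rintro x ⟨T, rfl, hall⟩
    have := (hall _ hS0).length_le
    rw [hlenL _ hS0] at this
    exact this
  have hKne : K.Nonempty := ⟨0, ⟨[], rfl, fun s _ => List.nil_sublist s⟩⟩
  constructor
  · intro hge
    obtain ⟨T, hTlen, hTsub⟩ := Nat.sSup_mem hKne hKbdd
    have hTge : m ≤ T.length := by rw [hTlen]; exact hge
    have hT'len : (T.take m).length = m := by
      rw [List.length_take]
      omega
    have hT'sub : ∀ s ∈ List.ofFn S, (T.take m).Sublist s :=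
      fun s hs => (List.take_sublist m T).trans (hTsub s hs)
    have hv : (L.map fun s => editDist s (T.take m)).foldr max 0 ≤ m := by
      apply foldr_max_le
      intro x hx
      simp only [List.mem_map] at hx
      obtain ⟨s, hs, rfl⟩ := hx
      rcases hmemL s hs with hs' | rfl
      · have h4 := editDist_le_of_sublist (hT'sub s hs')
        rw [hT'len, hlenL s hs'] at h4
        omega
      · rw [editDist_nil_left, hT'len]
    have hub : centerED L ≤ m := le_trans (Nat.sInf_le ⟨T.take m, rfl⟩) hv
    exact le_antisymm hub hclow
  · intro hlt
    by_contra hcon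
    push_neg at hcon
    have hfold : (L.map fun s => editDist s T0).foldr max 0 ≤ m := by
      rw [centerED, hT0] at hcon
      omega
    have hT0len : T0.length ≤ m := by
      have h2 : editDist ([] : List α) T0 ≤ (L.map fun s => editDist s T0).foldr max 0 :=
        le_foldr_max (List.mem_map_of_mem hnilL)
      rw [editDist_nil_left] at h2
      omega
    have hsub : ∀ s ∈ List.ofFn S, T0.Sublist s := by
      intro s hs
      have hsL : s ∈ L := List.mem_append_left _ hs
      have hed0 : editDist s T0 ≤ (L.map fun s => editDist s T0).foldr max 0 :=
        le_foldr_max (List.mem_map_of_mem hsL)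
      have hed : editDist s T0 ≤ m := le_trans hed0 hfold
      obtain ⟨U, hUs, hUT, hlen2⟩ := exists_common_subseq s T0
      have hUle := hUT.length_le
      rw [hlenL s hs] at hlen2
      have hUeq : U.length = T0.length := by omega
      exact (hUT.eq_of_length hUeq) ▸ hUs
    have hT0ge : m ≤ T0.length := by
      have hed0 : editDist (S ⟨0, hk⟩) T0 ≤ (L.map fun s => editDist s T0).foldr max 0 :=
        le_foldr_max (List.mem_map_of_mem hS0L)
      have hed : editDist (S ⟨0, hk⟩) T0 ≤ m := le_trans hed0 hfold
      have h3 := length_le_editDist_add (S ⟨0, hk⟩) T0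
      rw [hlen ⟨0, hk⟩] at h3
      omega
    have : m ≤ lcsLen (List.ofFn S) :=
      le_trans hT0ge (le_csSup hKbdd ⟨T0, rfl, hsub⟩)
    omega
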